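/- Let (X,d) be a complete separable metric space, m a nonnegative Borel measure on X, U ⊆ X a Borel set, k ∈ ℕ, and φ : U → ℝ^k a map that is biLipschitz onto its image and satisfies C^{-1}·L^k|_{φ(U)} ≤ φ_*(m|_U) ≤ C·L^k|_{φ(U)} for some constant C ≥ 1. Let (r_j)_{j∈ℕ} be a sequence of positive reals with r_j ↓ 0 and define W := { (x̄, (φ(x)−φ(x̄))/r_j) : x̄, x ∈ U, j ∈ ℕ } ⊆ X × ℝ^k. Then W is Borel and (m|_U ⊗ L^k)( (U × ℝ^k) \ W ) = 0. -/

import Mathlib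

open MeasureTheory Metric Set

lemma aux_density_null {k : ℕ} (A : Set (EuclideanSpace ℝ (Fin k))) (hA : MeasurableSet A)
    (y : EuclideanSpace ℝ (Fin k))
    (hy : Filter.Tendsto (fun ρ => volume (A ∩ closedBall y ρ) / volume (closedBall y ρ))
      (nhdsWithin 0 (Set.Ioi 0)) (nhds 1))
    (r : ℕ → ℝ) (hrpos : ∀ j, 0 < r j)
    (hrlim : Filter.Tendsto r Filter.atTop (nhds 0)) :
    volume {v : EuclideanSpace ℝ (Fin k) | ∀ j, y + r j • v ∉ A} = 0 := by
  set T := {v : EuclideanSpace ℝ (Fin k) | ∀ j, y + r j • v ∉ A} with hT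
  have key : ∀ R : ℕ, volume (T ∩ ball 0 ((R : ℝ) + 1)) = 0 := by
    intro R
    have hR' : (0 : ℝ) < (R : ℝ) + 1 := by positivity
    set c := volume (ball (0 : EuclideanSpace ℝ (Fin k)) 1) with hc
    have hc_top : c ≠ ⊤ := measure_ball_lt_top.ne
    set q : ℕ → ENNReal := fun j =>
      volume (A ∩ closedBall y (r j * ((R : ℝ) + 1))) /
        volume (closedBall y (r j * ((R : ℝ) + 1))) with hq
    have step : ∀ j, volume (T ∩ ball 0 ((R : ℝ) + 1)) ≤
        (1 - q j) * (ENNReal.ofReal (((R : ℝ) + 1) ^ k) * c) := by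
      intro j
      set ρ := r j * ((R : ℝ) + 1) with hρ
      have hρpos : 0 < ρ := mul_pos (hrpos j) hR'
      have hcb : volume (closedBall y ρ) = ENNReal.ofReal (ρ ^ k) * c := by
        simpa [finrank_euclideanSpace_fin] using
          Measure.addHaar_closedBall (volume : Measure (EuclideanSpace ℝ (Fin k))) y hρpos.le
      have hcb0 : volume (closedBall y ρ) ≠ 0 :=
        (measure_closedBall_pos volume y hρpos).ne'
      have hcbt : volume (closedBall y ρ) ≠ ⊤ := measure_closedBall_lt_top.ne
      have hincl : T ∩ ball 0 ((R : ℝ) + 1) ⊆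
          (fun v => r j • v) ⁻¹' ((fun w => y + w) ⁻¹' (closedBall y ρ \ A)) := by
        rintro v ⟨hvT, hvB⟩
        simp only [mem_preimage, mem_diff]
        constructor
        · rw [mem_closedBall, dist_eq_norm]
          have h1 : y + r j • v - y = r j • v := by abel
          rw [h1, norm_smul, Real.norm_eq_abs, abs_of_pos (hrpos j)]
          have h2 := (mem_ball_zero_iff.1 hvB).le
          exact mul_le_mul_of_nonneg_left h2 (hrpos j).le
        · exact hvT j
      have hdiff : volume (closedBall y ρ \ A) =
          volume (closedBall y ρ) - volume (A ∩ closedBall y ρ) := by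
        have h1 : closedBall y ρ \ A = closedBall y ρ \ (A ∩ closedBall y ρ) := by
          ext v; simp only [mem_diff, mem_inter_iff]; tauto
        rw [h1]
        exact measure_diff inter_subset_right
          (hA.inter measurableSet_closedBall).nullMeasurableSet
          (ne_top_of_le_ne_top hcbt (measure_mono inter_subset_right))
      have hAc : volume (A ∩ closedBall y ρ) = q j * volume (closedBall y ρ) :=
        (ENNReal.div_mul_cancel hcb0 hcbt).symm
      have hsub : volume (closedBall y ρ \ A) = (1 - q j) * volume (closedBall y ρ) := by
        rw [hdiff, hAc, ENNReal.sub_mul (fun _ _ => hcbt), one_mul]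
      calc volume (T ∩ ball 0 ((R : ℝ) + 1))
          ≤ volume ((fun v => r j • v) ⁻¹' ((fun w => y + w) ⁻¹' (closedBall y ρ \ A))) :=
            measure_mono hincl
        _ = ENNReal.ofReal (|(r j ^ k)⁻¹|) *
              volume ((fun w => y + w) ⁻¹' (closedBall y ρ \ A)) := by
            have := Measure.addHaar_preimage_smul (volume : Measure (EuclideanSpace ℝ (Fin k)))
              (hrpos j).ne' ((fun w => y + w) ⁻¹' (closedBall y ρ \ A))
            simpa [finrank_euclideanSpace_fin] using this
        _ = ENNReal.ofReal ((r j ^ k)⁻¹) * volume (closedBall y ρ \ A) := by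
            rw [measure_preimage_add]
            congr 1
            rw [abs_of_pos (inv_pos.2 (pow_pos (hrpos j) k))]
        _ = ENNReal.ofReal ((r j ^ k)⁻¹) * ((1 - q j) * (ENNReal.ofReal (ρ ^ k) * c)) := by
            rw [hsub, hcb]
        _ = (1 - q j) * ((ENNReal.ofReal ((r j ^ k)⁻¹) * ENNReal.ofReal (ρ ^ k)) * c) := by
            ring
        _ = (1 - q j) * (ENNReal.ofReal (((R : ℝ) + 1) ^ k) * c) := by
            congr 2
            rw [← ENNReal.ofReal_mul (le_of_lt (inv_pos.2 (pow_pos (hrpos j) k)))]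
            congr 1
            rw [hρ, mul_pow, ← mul_assoc, inv_mul_cancel₀ (pow_ne_zero k (hrpos j).ne'), one_mul]
    have hρtend : Filter.Tendsto (fun j => r j * ((R : ℝ) + 1)) Filter.atTop
        (nhdsWithin 0 (Set.Ioi 0)) := by
      apply tendsto_nhdsWithin_of_tendsto_nhds_of_eventually_within
      · simpa using hrlim.mul_const ((R : ℝ) + 1)
      · exact Filter.Eventually.of_forall fun j => mul_pos (hrpos j) hR'
    have hqtend : Filter.Tendsto q Filter.atTop (nhds 1) := hy.comp hρtend
    have h1q : Filter.Tendsto (fun j => 1 - q j) Filter.atTop (nhds 0) := by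
      have := ENNReal.Tendsto.sub (tendsto_const_nhds : Filter.Tendsto (fun _ : ℕ => (1:ENNReal)) Filter.atTop (nhds 1)) hqtend
        (Or.inl ENNReal.one_ne_top)
      simpa using this
    have htend : Filter.Tendsto
        (fun j => (1 - q j) * (ENNReal.ofReal (((R : ℝ) + 1) ^ k) * c)) Filter.atTop (nhds 0) := by
      have := ENNReal.Tendsto.mul_const (b := ENNReal.ofReal (((R : ℝ) + 1) ^ k) * c) h1q
        (Or.inr (ENNReal.mul_ne_top ENNReal.ofReal_ne_top hc_top))
      simpa using this
    have : volume (T ∩ ball 0 ((R : ℝ) + 1)) ≤ 0 :=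
      ge_of_tendsto htend (Filter.Eventually.of_forall step)
    exact le_antisymm this zero_le
  have hcover : T ⊆ ⋃ R : ℕ, T ∩ ball 0 ((R : ℝ) + 1) := by
    intro v hv
    obtain ⟨R, hR⟩ := exists_nat_gt ‖v‖
    exact mem_iUnion.2 ⟨R, hv, mem_ball_zero_iff.2 (by linarith)⟩
  exact measure_mono_null hcover (measure_iUnion_null key)

theorem stmt8 {X : Type*} [MetricSpace X] [CompleteSpace X] [SecondCountableTopology X]
    [MeasurableSpace X] [BorelSpace X] (m : Measure X)
    (k : ℕ) (U : Set X) (hU : MeasurableSet U)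
    (φ : X → EuclideanSpace ℝ (Fin k))
    (hbiLip : ∃ K : NNReal, 0 < K ∧ ∀ x ∈ U, ∀ y ∈ U,
      dist x y ≤ K * dist (φ x) (φ y) ∧ dist (φ x) (φ y) ≤ K * dist x y)
    (C : NNReal) (hC : 1 ≤ C)
    (hmeascomp : ∀ B : Set (EuclideanSpace ℝ (Fin k)), MeasurableSet B →
      volume (B ∩ φ '' U) ≤ (C : ENNReal) * m (U ∩ φ ⁻¹' B) ∧
      m (U ∩ φ ⁻¹' B) ≤ (C : ENNReal) * volume (B ∩ φ '' U))
    (r : ℕ → ℝ) (hrpos : ∀ j, 0 < r j) (hranti : Antitone r)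
    (hrlim : Filter.Tendsto r Filter.atTop (nhds 0)) :
    MeasurableSet (⋃ j : ℕ,
        (fun p : X × X => ((p.1 : X), (r j)⁻¹ • (φ p.2 - φ p.1))) '' (U ×ˢ U)) ∧
      ((m.restrict U).prod volume)
        ((U ×ˢ (Set.univ : Set (EuclideanSpace ℝ (Fin k)))) \
          ⋃ j : ℕ, (fun p : X × X => ((p.1 : X), (r j)⁻¹ • (φ p.2 - φ p.1))) '' (U ×ˢ U)) = 0 := by
  obtain ⟨K, hK, hbi⟩ := hbiLip
  have hφcont : ContinuousOn φ U :=
    (LipschitzOnWith.of_dist_le_mul fun x hx y hy => (hbi x hx y hy).2).continuousOn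
  have hφinj : InjOn φ U := by
    intro x hx y hy h
    have := (hbi x hx y hy).1
    rw [h, dist_self, mul_zero] at this
    exact dist_le_zero.1 this
  -- A is measurable
  have hA : MeasurableSet (φ '' U) := hU.image_of_continuousOn_injOn hφcont hφinj
  -- W_j is measurable
  have hWj : ∀ j, MeasurableSet
      ((fun p : X × X => ((p.1 : X), (r j)⁻¹ • (φ p.2 - φ p.1))) '' (U ×ˢ U)) := by
    intro j
    apply (hU.prod hU).image_of_continuousOn_injOn
    · apply ContinuousOn.prodMk continuousOn_fst
      refine ContinuousOn.const_smul (g := fun p : X × X => φ p.2 - φ p.1) ?_ (r j)⁻¹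
      exact (hφcont.comp continuousOn_snd fun p hp => hp.2).sub
        (hφcont.comp continuousOn_fst fun p hp => hp.1)
    · intro p hp u hu h
      simp only [Prod.mk.injEq] at h
      obtain ⟨h1, h2⟩ := h
      have h3 : φ p.2 - φ p.1 = φ u.2 - φ u.1 :=
        smul_right_injective _ (inv_ne_zero (hrpos j).ne') h2
      have h4 : φ p.2 = φ u.2 := by rw [h1] at h3; exact sub_left_inj.mp h3
      have h5 : p.2 = u.2 := hφinj hp.2 hu.2 h4
      exact Prod.ext h1 h5
  have hW : MeasurableSet (⋃ j : ℕ,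
      (fun p : X × X => ((p.1 : X), (r j)⁻¹ • (φ p.2 - φ p.1))) '' (U ×ˢ U)) :=
    MeasurableSet.iUnion hWj
  refine ⟨hW, ?_⟩
  set W := ⋃ j : ℕ, (fun p : X × X => ((p.1 : X), (r j)⁻¹ • (φ p.2 - φ p.1))) '' (U ×ˢ U)
  set s := (U ×ˢ (Set.univ : Set (EuclideanSpace ℝ (Fin k)))) \ W with hs_def
  have hs : MeasurableSet s := (hU.prod MeasurableSet.univ).diff hW
  rw [Measure.measure_prod_null hs]
  -- density points
  have hdens := Besicovitch.ae_tendsto_measure_inter_div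
    (volume : Measure (EuclideanSpace ℝ (Fin k))) (φ '' U)
  set bad := {y : EuclideanSpace ℝ (Fin k) |
    ¬ Filter.Tendsto (fun ρ => volume (φ '' U ∩ closedBall y ρ) / volume (closedBall y ρ))
      (nhdsWithin 0 (Set.Ioi 0)) (nhds 1)} with hbad_def
  have hbadnull : volume (bad ∩ φ '' U) = 0 := by
    have := hdens
    rw [MeasureTheory.ae_iff] at this
    rw [Measure.restrict_apply' hA] at this
    exact this
  set B := toMeasurable volume (bad ∩ φ '' U) with hB_def
  have hBmeas : MeasurableSet B := measurableSet_toMeasurable _ _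
  have hBnull : volume B = 0 := by rw [measure_toMeasurable]; exact hbadnull
  have hmB : m (U ∩ φ ⁻¹' B) = 0 := by
    have h2 := (hmeascomp B hBmeas).2
    have : volume (B ∩ φ '' U) = 0 :=
      measure_mono_null inter_subset_left hBnull
    rw [this, mul_zero] at h2
    exact le_antisymm h2 zero_le
  have h1 : ∀ᵐ xb ∂m.restrict U, xb ∈ U := ae_restrict_mem hU
  have h2 : ∀ᵐ xb ∂m.restrict U, φ xb ∉ B := by
    rw [MeasureTheory.ae_iff]
    rw [Measure.restrict_apply' hU]
    simp only [not_not]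
    refine measure_mono_null ?_ hmB
    intro x hx
    exact ⟨hx.2, hx.1⟩
  filter_upwards [h1, h2] with xb hxbU hxbB
  simp only [Pi.zero_apply]
  -- the slice
  have hslice : Prod.mk xb ⁻¹' s ⊆
      {v : EuclideanSpace ℝ (Fin k) | ∀ j, φ xb + r j • v ∉ φ '' U} := by
    intro v hv
    intro j hmem
    obtain ⟨x, hxU, hx⟩ := hmem
    apply hv.2
    refine mem_iUnion.2 ⟨j, ⟨(xb, x), ⟨hxbU, hxU⟩, ?_⟩⟩
    simp only
    rw [hx]
    have : φ xb + r j • v - φ xb = r j • v := by abel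
    rw [this, inv_smul_smul₀ (hrpos j).ne']
  refine measure_mono_null hslice ?_
  apply aux_density_null (φ '' U) hA (φ xb) ?_ r hrpos hrlim
  by_contra h
  exact hxbB (subset_toMeasurable _ _ ⟨h, mem_image_of_mem φ hxbU⟩)
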